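/- Let s ∈ (0,2] and α > 0. Then there exist constants c, C > 0, depending only on α and s, such that for all x ≥ 0: c · exp(α x^s) ≤ ℰ_{2/s}(α^{2/s} x²) ≤ C · exp(α x^s), where ℰ_a(y) = Σ_{k=0}^{∞} y^k / Γ(ak+1) is the Mittag-Leffler function of parameter a = 2/s. -/

import Mathlib

noncomputable section

/-- The Mittag-Leffler function `ℰ_a(y) = ∑_{k=0}^∞ y^k / Γ(ak+1)`. -/
def mittagLeffler (a y : ℝ) : ℝ :=
  ∑' k : ℕ, y ^ k / Real.Gamma (a * k + 1)

set_option maxHeartbeats 1000000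

namespace MLaux

open Real Finset Nat

lemma gamma_mono {x y : ℝ} (hx : 2 ≤ x) (hxy : x ≤ y) : Gamma x ≤ Gamma y := by
  rcases eq_or_lt_of_le hxy with h | h
  · rw [h]
  · exact (Gamma_strictMonoOn_Ici (Set.mem_Ici.mpr hx)
      (Set.mem_Ici.mpr (hx.trans hxy)) h).le

lemma arg_pos {a : ℝ} (ha : 1 ≤ a) (k : ℕ) : 0 < a * k + 1 := by
  have : (0:ℝ) ≤ a * k := mul_nonneg (by linarith) (Nat.cast_nonneg k)
  linarith

lemma summable_ml {a : ℝ} (ha : 1 ≤ a) {y : ℝ} (hy : 0 ≤ y) :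
    Summable (fun k : ℕ => y ^ k / Gamma (a * k + 1)) := by
  refine Summable.of_nonneg_of_le
    (fun k => div_nonneg (pow_nonneg hy k) (Gamma_pos_of_pos (arg_pos ha k)).le)
    (fun k => ?_) (Real.summable_pow_div_factorial y)
  have hfac : (k ! : ℝ) ≤ Gamma (a * k + 1) := by
    rcases Nat.eq_zero_or_pos k with hk | hk
    · subst hk; simp [Real.Gamma_one]
    · rw [← Real.Gamma_nat_eq_factorial]
      refine gamma_mono ?_ ?_
      · have : (1:ℝ) ≤ (k:ℝ) := by exact_mod_cast hk
        push_cast; linarith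
      · have : (k:ℝ) ≤ a * k := by
          nlinarith [Nat.cast_nonneg (α := ℝ) k]
        linarith
  gcongr


lemma gamma_le_mul {x θ : ℝ} (hx : 0 < x) (hθ : 0 ≤ θ) (hθ1 : θ ≤ 1) :
    Gamma (x + θ) ≤ Gamma x * x ^ θ := by
  have hx1 : (0:ℝ) < x + 1 := by linarith
  have hc := convexOn_log_Gamma.2 (Set.mem_Ioi.mpr hx) (Set.mem_Ioi.mpr hx1)
    (by linarith : (0:ℝ) ≤ 1 - θ) hθ (by ring)
  simp only [smul_eq_mul, Function.comp_apply] at hc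
  have harg : (1 - θ) * x + θ * (x + 1) = x + θ := by ring
  rw [harg, Gamma_add_one hx.ne', log_mul hx.ne' (Gamma_pos_of_pos hx).ne'] at hc
  have h2 : log (Gamma (x + θ)) ≤ log (Gamma x) + θ * log x := by nlinarith [hc]
  have hpos : 0 < Gamma (x + θ) := Gamma_pos_of_pos (by linarith)
  calc Gamma (x + θ) = exp (log (Gamma (x + θ))) := (exp_log hpos).symm
    _ ≤ exp (log (Gamma x) + θ * log x) := exp_le_exp.mpr h2
    _ = Gamma x * x ^ θ := by
        rw [exp_add, exp_log (Gamma_pos_of_pos hx), rpow_def_of_pos hx, mul_comm θ]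

lemma mul_le_gamma {x θ : ℝ} (hx : 0 < x) (hθ : 0 ≤ θ) (hθ1 : θ ≤ 1) :
    Gamma (x + 1) * (x + θ) ^ θ ≤ Gamma (x + 1 + θ) := by
  have hxθ : 0 < x + θ := by linarith
  have h1θ : 0 < x + 1 + θ := by linarith
  have hc := convexOn_log_Gamma.2 (Set.mem_Ioi.mpr hxθ) (Set.mem_Ioi.mpr h1θ)
    hθ (by linarith : (0:ℝ) ≤ 1 - θ) (by ring)
  simp only [smul_eq_mul, Function.comp_apply] at hc
  have harg : θ * (x + θ) + (1 - θ) * (x + 1 + θ) = x + 1 := by ring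
  rw [harg] at hc
  have hrec : Gamma (x + 1 + θ) = (x + θ) * Gamma (x + θ) := by
    have h := Gamma_add_one hxθ.ne'
    rw [show x + θ + 1 = x + 1 + θ by ring] at h
    exact h
  rw [hrec, log_mul hxθ.ne' (Gamma_pos_of_pos hxθ).ne'] at hc
  have h2 : log (Gamma (x + 1)) + θ * log (x + θ) ≤ log ((x + θ) * Gamma (x + θ)) := by
    rw [log_mul hxθ.ne' (Gamma_pos_of_pos hxθ).ne']
    nlinarith [hc]
  have hpos1 : 0 < Gamma (x + 1) := Gamma_pos_of_pos (by linarith)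
  calc Gamma (x + 1) * (x + θ) ^ θ
      = exp (log (Gamma (x + 1)) + θ * log (x + θ)) := by
        rw [exp_add, exp_log hpos1, rpow_def_of_pos hxθ, mul_comm θ]
    _ ≤ exp (log ((x + θ) * Gamma (x + θ))) := exp_le_exp.mpr h2
    _ = Gamma (x + 1 + θ) := by
        rw [exp_log (by positivity), hrec]

lemma gamma_add_le {x : ℝ} (hx : 1 ≤ x) :
    ∀ n : ℕ, ∀ δ : ℝ, 0 ≤ δ → δ ≤ n → Gamma (x + δ) ≤ Gamma x * (x + δ) ^ δ := by
  intro n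
  induction n with
  | zero =>
    intro δ h0 h1
    have : δ = 0 := le_antisymm (by exact_mod_cast h1) h0
    subst this
    simp
  | succ n ih =>
    intro δ h0 hn
    have hx0 : (0:ℝ) < x := by linarith
    by_cases hδ : δ ≤ 1
    · calc Gamma (x + δ) ≤ Gamma x * x ^ δ := gamma_le_mul hx0 h0 hδ
        _ ≤ Gamma x * (x + δ) ^ δ := by
            have h := Real.rpow_le_rpow (le_of_lt hx0) (by linarith : x ≤ x + δ) h0
            exact mul_le_mul_of_nonneg_left h (Gamma_pos_of_pos hx0).le
    · push_neg at hδ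
      have ih' := ih (δ - 1) (by linarith) (by push_cast at hn ⊢; linarith)
      have hrec : Gamma (x + δ) = (x + δ - 1) * Gamma (x + (δ - 1)) := by
        have h := Gamma_add_one (by linarith : x + δ - 1 ≠ 0)
        rw [show x + δ - 1 + 1 = x + δ by ring] at h
        rw [h]; ring_nf
      have hbase : (0:ℝ) < x + δ := by linarith
      calc Gamma (x + δ) = (x + δ - 1) * Gamma (x + (δ - 1)) := hrec
        _ ≤ (x + δ) * (Gamma x * (x + (δ - 1)) ^ (δ - 1)) := by
            have hg : 0 ≤ Gamma (x + (δ - 1)) := (Gamma_pos_of_pos (by linarith)).le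
            have := mul_le_mul_of_nonneg_left ih' (le_of_lt (show (0:ℝ) < x + δ - 1 by linarith))
            calc (x + δ - 1) * Gamma (x + (δ - 1))
                ≤ (x + δ - 1) * (Gamma x * (x + (δ - 1)) ^ (δ - 1)) := this
              _ ≤ (x + δ) * (Gamma x * (x + (δ - 1)) ^ (δ - 1)) := by
                  have hnn : 0 ≤ Gamma x * (x + (δ - 1)) ^ (δ - 1) :=
                    mul_nonneg (Gamma_pos_of_pos hx0).le (Real.rpow_nonneg (by linarith) _)
                  nlinarith
        _ ≤ (x + δ) * (Gamma x * (x + δ) ^ (δ - 1)) := by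
            have h := Real.rpow_le_rpow (by linarith : (0:ℝ) ≤ x + (δ - 1))
              (by linarith : x + (δ - 1) ≤ x + δ) (by linarith : (0:ℝ) ≤ δ - 1)
            exact mul_le_mul_of_nonneg_left
              (mul_le_mul_of_nonneg_left h (Gamma_pos_of_pos hx0).le) hbase.le
        _ = Gamma x * (x + δ) ^ δ := by
            have h : (x + δ) ^ δ = (x + δ) ^ (1:ℝ) * (x + δ) ^ (δ - 1) := by
              rw [← rpow_add hbase]; ring_nf
            rw [h, rpow_one]; ring


lemma ml_eq_aux {a t : ℝ} (ht : 0 ≤ t) (k : ℕ) : (t ^ a) ^ k = t ^ (a * k) := by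
  rw [← Real.rpow_natCast (t ^ a) k, ← Real.rpow_mul ht]

lemma summable_u {a : ℝ} (ha : 1 ≤ a) {t : ℝ} (ht : 0 ≤ t) :
    Summable (fun k : ℕ => t ^ (a * k) / Gamma (a * k + 1)) := by
  have h := summable_ml ha (Real.rpow_nonneg ht a)
  refine h.congr fun k => ?_
  rw [ml_eq_aux ht]

lemma u_nonneg {a : ℝ} (ha : 1 ≤ a) {t : ℝ} (ht : 0 ≤ t) (k : ℕ) :
    0 ≤ t ^ (a * k) / Gamma (a * k + 1) :=
  div_nonneg (Real.rpow_nonneg ht _) (Gamma_pos_of_pos (arg_pos ha k)).le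

lemma exp_tsum (t : ℝ) : exp t = ∑' m : ℕ, t ^ m / m ! := by
  rw [Real.exp_eq_exp_ℝ, NormedSpace.exp_eq_tsum_div]

lemma exp_tsum_shift (t : ℝ) : ∑' m : ℕ, t ^ (m + 1) / (m + 1)! = exp t - 1 := by
  have hs : Summable (fun m : ℕ => t ^ m / m !) := Real.summable_pow_div_factorial t
  have h := Summable.tsum_eq_zero_add hs
  rw [← exp_tsum] at h
  simp only [pow_zero, Nat.factorial_zero, Nat.cast_one] at h
  linarith [h]


lemma term_upper {a : ℝ} (ha : 1 ≤ a) {t : ℝ} (ht : 0 ≤ t) {k : ℕ} (hk : 1 ≤ k) :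
    t ^ (a * k) / Gamma (a * k + 1) ≤
      t ^ (⌊a * k⌋₊) / (⌊a * k⌋₊)! + 2 * t ^ (⌊a * k⌋₊ + 1) / (⌊a * k⌋₊ + 1)! := by
  set m := ⌊a * k⌋₊ with hm
  have hak0 : (0:ℝ) ≤ a * k := mul_nonneg (by linarith) (Nat.cast_nonneg k)
  have hak1 : (1:ℝ) ≤ a * k := by
    have : (1:ℝ) ≤ (k:ℝ) := by exact_mod_cast hk
    nlinarith
  have hm1 : 1 ≤ m := Nat.le_floor (by exact_mod_cast hak1)
  have hmle : (m:ℝ) ≤ a * k := Nat.floor_le hak0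
  have hmlt : a * k < m + 1 := Nat.lt_floor_add_one _
  set θ := a * k - m with hθdef
  have hθ0 : 0 ≤ θ := by simp only [hθdef]; linarith
  have hθ1 : θ ≤ 1 := by simp only [hθdef]; linarith
  have hmpos : (0:ℝ) < m := by exact_mod_cast hm1
  -- Gamma lower bound
  have hGam : (m ! : ℝ) * (m:ℝ) ^ θ ≤ Gamma (a * k + 1) := by
    have hB := mul_le_gamma (x := (m:ℝ)) (θ := θ) hmpos hθ0 hθ1
    have harg : (m:ℝ) + 1 + θ = a * k + 1 := by simp only [hθdef]; ring
    rw [harg] at hB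
    refine le_trans ?_ hB
    rw [Real.Gamma_nat_eq_factorial]
    have : (m:ℝ) ^ θ ≤ ((m:ℝ) + θ) ^ θ :=
      Real.rpow_le_rpow hmpos.le (by linarith) hθ0
    have hfac : (0:ℝ) ≤ (m ! : ℝ) := by positivity
    nlinarith
  have hGpos : 0 < Gamma (a * k + 1) := Gamma_pos_of_pos (by linarith)
  rcases eq_or_lt_of_le ht with h0 | htpos
  · -- t = 0
    rw [← h0]
    rw [Real.zero_rpow (by linarith : a * (k:ℝ) ≠ 0)]
    have : (0:ℝ) ^ m = 0 := zero_pow (by omega)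
    rw [this]
    simp
  -- t > 0
  have hnum : t ^ (a * k) = t ^ m * t ^ θ := by
    rw [← Real.rpow_natCast t m, ← Real.rpow_add htpos]
    congr 1
    simp only [hθdef]; ring
  have hkey : t ^ (a * k) / Gamma (a * k + 1) ≤ (t ^ m / m !) * (t / m) ^ θ := by
    have hge : (0:ℝ) < (m ! : ℝ) * (m:ℝ) ^ θ := by positivity
    calc t ^ (a * k) / Gamma (a * k + 1) ≤ t ^ (a * k) / ((m ! : ℝ) * (m:ℝ) ^ θ) := by
          gcongr
      _ = (t ^ m / m !) * (t / m) ^ θ := by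
          rw [hnum, Real.div_rpow htpos.le hmpos.le]
          field_simp
  rcases le_or_gt t m with hc | hc
  · -- t ≤ m
    have : (t / m) ^ θ ≤ 1 :=
      Real.rpow_le_one (by positivity) (by rw [div_le_one hmpos]; exact hc) hθ0
    have h1 : (t ^ m / m !) * (t / m) ^ θ ≤ t ^ m / m ! := by
      have h' : (t ^ m / (m ! : ℝ)) * (t / m) ^ θ ≤ (t ^ m / m !) * 1 := by
        gcongr
      simpa using h'
    have h2 : (0:ℝ) ≤ 2 * t ^ (m + 1) / (m + 1)! := by positivity
    linarith [hkey.trans h1]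
  · -- m < t
    have hbase1 : (1:ℝ) ≤ t / m := by rw [le_div_iff₀ hmpos]; linarith
    have : (t / m) ^ θ ≤ t / m := by
      have := Real.rpow_le_rpow_of_exponent_le hbase1 hθ1
      rwa [Real.rpow_one] at this
    have h1 : (t ^ m / m !) * (t / m) ^ θ ≤ (t ^ m / m !) * (t / m) := by
      gcongr
    have h2 : (t ^ m / m !) * (t / m) ≤ 2 * t ^ (m + 1) / (m + 1)! := by
      rw [_root_.div_mul_div_comm, ← pow_succ]
      rw [div_le_div_iff₀ (by positivity) (by positivity)]
      have hfacc : ((m+1)! : ℝ) = (m + 1) * m ! := by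
        push_cast [Nat.factorial_succ]; ring
      rw [hfacc]
      have hmm : ((m:ℝ) + 1) ≤ 2 * m := by
        have : (1:ℝ) ≤ (m:ℝ) := by exact_mod_cast hm1
        linarith
      have ht1 : (0:ℝ) ≤ t ^ (m+1) := by positivity
      have hf : (0:ℝ) ≤ (m ! : ℝ) := by positivity
      nlinarith [mul_le_mul_of_nonneg_left hmm (mul_nonneg ht1 hf)]
    have h3 : (0:ℝ) ≤ t ^ m / m ! := by positivity
    linarith [hkey.trans (h1.trans h2)]

lemma upper {a : ℝ} (ha : 1 ≤ a) {t : ℝ} (ht : 0 ≤ t) :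
    (∑' k : ℕ, t ^ (a * k) / Gamma (a * k + 1)) ≤ 4 * exp t := by
  have hsum : Summable (fun k : ℕ => t ^ (a * k) / Gamma (a * k + 1)) := summable_u ha ht
  rw [Summable.tsum_eq_zero_add hsum]
  have hu0 : t ^ (a * ((0:ℕ):ℝ)) / Gamma (a * ((0:ℕ):ℝ) + 1) = 1 := by
    norm_num [Real.rpow_zero, Real.Gamma_one]
  have hmono : StrictMono (fun k : ℕ => ⌊a * (((k+1:ℕ)):ℝ)⌋₊) := by
    apply strictMono_nat_of_lt_succ
    intro k
    have hnn : (0:ℝ) ≤ a * ((k:ℝ) + 1) :=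
      mul_nonneg (by linarith) (by positivity)
    have h1 : a * ((k:ℝ) + 1) + 1 ≤ a * ((k:ℝ) + 2) := by
      nlinarith [Nat.cast_nonneg (α := ℝ) k]
    have h2 : ⌊a * ((k:ℝ)+1)⌋₊ + 1 = ⌊a * ((k:ℝ)+1) + 1⌋₊ := by
      rw [Nat.floor_add_one hnn]
    have hc1 : ((k+1:ℕ):ℝ) = (k:ℝ) + 1 := by push_cast; ring
    have hc2 : ((k+1+1:ℕ):ℝ) = (k:ℝ) + 2 := by push_cast; ring
    simp only [hc1, hc2]
    calc ⌊a * ((k:ℝ) + 1)⌋₊ < ⌊a * ((k:ℝ) + 1)⌋₊ + 1 := Nat.lt_succ_self _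
      _ = ⌊a * ((k:ℝ) + 1) + 1⌋₊ := h2
      _ ≤ ⌊a * ((k:ℝ) + 2)⌋₊ := Nat.floor_le_floor h1
  have hgsum1 : Summable (fun m : ℕ => t ^ m / m !) := Real.summable_pow_div_factorial t
  have hgsum2 : Summable (fun m : ℕ => 2 * t ^ (m + 1) / (m + 1)!) := by
    have h' : Summable (fun m : ℕ => t ^ (m + 1) / (m + 1)!) :=
      (summable_nat_add_iff 1).mpr hgsum1
    refine (h'.mul_left 2).congr fun m => ?_
    ring
  have hgsum : Summable (fun m : ℕ => t ^ m / m ! + 2 * t ^ (m + 1) / (m + 1)!) :=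
    hgsum1.add hgsum2
  have hfsum : Summable (fun k : ℕ => t ^ (a * ((k+1:ℕ):ℝ)) / Gamma (a * ((k+1:ℕ):ℝ) + 1)) :=
    hsum.comp_injective (add_left_injective 1)
  have hterm : ∀ k : ℕ, t ^ (a * ((k+1:ℕ):ℝ)) / Gamma (a * ((k+1:ℕ):ℝ) + 1) ≤
      (fun m : ℕ => t ^ m / m ! + 2 * t ^ (m+1) / (m+1)!) (⌊a * ((k+1:ℕ):ℝ)⌋₊) :=
    fun k => term_upper ha ht (k := k+1) (by omega)
  have htail := Summable.tsum_le_tsum_of_inj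
      (f := fun k : ℕ => t ^ (a * ((k+1:ℕ):ℝ)) / Gamma (a * ((k+1:ℕ):ℝ) + 1))
      (g := fun m : ℕ => t ^ m / m ! + 2 * t ^ (m+1) / (m+1)!)
      (fun k : ℕ => ⌊a * ((k+1:ℕ):ℝ)⌋₊) hmono.injective
      (fun c _ => by positivity) hterm hfsum hgsum
  have hgval : ∑' m : ℕ, (t ^ m / m ! + 2 * t ^ (m+1) / (m+1)!) = exp t + 2 * (exp t - 1) := by
    rw [Summable.tsum_add hgsum1 hgsum2]
    have e1 : ∑' m : ℕ, t ^ m / m ! = exp t := (exp_tsum t).symm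
    have e2 : ∑' m : ℕ, 2 * t ^ (m + 1) / (m + 1)! = 2 * (exp t - 1) := by
      rw [← exp_tsum_shift t, ← tsum_mul_left]
      congr 1; ext m; ring
    rw [e1, e2]
  rw [hgval] at htail
  have h1e : 1 ≤ exp t := Real.one_le_exp ht
  have := htail
  linarith [hu0 ▸ le_refl (1:ℝ), htail]


lemma tail_lower {t : ℝ} (ht : 2 ≤ t) :
    (1/3 : ℝ) * exp t ≤ ∑ m ∈ Finset.range (2 * ⌈t⌉₊), t ^ m / m ! := by
  set D := ⌈t⌉₊ with hD
  have ht0 : (0:ℝ) < t := by linarith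
  have hDt : t ≤ D := Nat.le_ceil t
  have hsum : Summable (fun m : ℕ => t ^ m / m !) := Real.summable_pow_div_factorial t
  have hsplit := Summable.sum_add_tsum_nat_add (f := fun m : ℕ => t ^ m / m !) (2 * D) hsum
  have hsplitD := Summable.sum_add_tsum_nat_add (f := fun m : ℕ => t ^ m / m !) D hsum
  rw [← exp_tsum] at hsplit hsplitD
  have hterm : ∀ j : ℕ, t ^ (j + 2 * D) / (j + 2 * D)! ≤
      exp (-2/3) * (t ^ (j + D) / (j + D)!) := by
    intro j
    have hfac : ((j + D)! : ℝ) * ((j + D + 1 : ℕ) : ℝ) ^ D ≤ ((j + 2 * D)! : ℝ) := by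
      have h := Nat.factorial_mul_pow_le_factorial (m := j + D) (n := D)
      have h2 : j + D + D = j + 2 * D := by omega
      rw [h2] at h
      exact_mod_cast h
    have hpow : t ^ (j + 2 * D) = t ^ (j + D) * t ^ D := by
      rw [← pow_add]; congr 1; omega
    have hb : (0:ℝ) < ((j + D + 1 : ℕ) : ℝ) := by positivity
    have hb2 : t + 1 ≤ ((j + D + 1 : ℕ) : ℝ) := by
      push_cast
      have hj : (0:ℝ) ≤ (j:ℝ) := by positivity
      linarith
    have hratio : t ^ D / ((j + D + 1 : ℕ) : ℝ) ^ D ≤ exp (-2/3) := by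
      have h1 : t ^ D / ((j + D + 1 : ℕ) : ℝ) ^ D = (t / ((j + D + 1 : ℕ) : ℝ)) ^ D := by
        rw [div_pow]
      have h2 : t / ((j + D + 1 : ℕ) : ℝ) ≤ t / (t + 1) :=
        div_le_div_of_nonneg_left ht0.le (by linarith) hb2
      have h3 : t / (t + 1) ≤ exp (-1/(t+1)) := by
        have := Real.add_one_le_exp (-1/(t+1))
        have heq : -1/(t+1) + 1 = t/(t+1) := by field_simp; ring
        linarith [heq ▸ this]
      have h4 : (t / ((j + D + 1 : ℕ) : ℝ)) ^ D ≤ exp (-1/(t+1)) ^ D := by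
        apply pow_le_pow_left₀ (by positivity)
        exact h2.trans h3
      have h5 : exp (-1/(t+1)) ^ D = exp (D * (-1/(t+1))) := (Real.exp_nat_mul _ D).symm
      have h6 : exp ((D:ℝ) * (-1/(t+1))) ≤ exp (-2/3) := by
        rw [Real.exp_le_exp]
        have hne : (0:ℝ) < t + 1 := by linarith
        have hgoal : (2/3 : ℝ) ≤ (D:ℝ)/(t+1) := by
          rw [le_div_iff₀ hne]
          linarith [hDt]
        have heq : (D:ℝ) * (-1/(t+1)) = -((D:ℝ)/(t+1)) := by ring
        rw [heq]
        linarith [hgoal]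
      rw [h1]
      exact h4.trans (h5 ▸ h6)
    calc t ^ (j + 2 * D) / (j + 2 * D)!
        ≤ t ^ (j + 2 * D) / (((j + D)! : ℝ) * ((j + D + 1 : ℕ) : ℝ) ^ D) := by
          gcongr
      _ = (t ^ (j + D) / (j + D)!) * (t ^ D / ((j + D + 1 : ℕ) : ℝ) ^ D) := by
          rw [hpow, _root_.div_mul_div_comm]
      _ ≤ (t ^ (j + D) / (j + D)!) * exp (-2/3) := by
          gcongr
      _ = exp (-2/3) * (t ^ (j + D) / (j + D)!) := by ring
  have hsh2 : Summable (fun j : ℕ => t ^ (j + 2 * D) / (j + 2 * D)!) :=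
    (summable_nat_add_iff (2*D)).mpr hsum
  have hshD : Summable (fun j : ℕ => t ^ (j + D) / (j + D)!) :=
    (summable_nat_add_iff D).mpr hsum
  have htail2 : ∑' j : ℕ, t ^ (j + 2 * D) / (j + 2 * D)! ≤
      exp (-2/3) * ∑' j : ℕ, t ^ (j + D) / (j + D)! := by
    rw [← tsum_mul_left]
    exact Summable.tsum_le_tsum hterm hsh2 (hshD.mul_left _)
  have htailD : ∑' j : ℕ, t ^ (j + D) / (j + D)! ≤ exp t := by
    have hpos : (0:ℝ) ≤ ∑ m ∈ Finset.range D, t ^ m / m ! :=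
      Finset.sum_nonneg fun m _ => by positivity
    linarith [hsplitD]
  have hexp23 : exp (-2/3 : ℝ) ≤ 2/3 := by
    have h := Real.add_one_le_exp (2/3 : ℝ)
    have hp := Real.exp_pos (2/3 : ℝ)
    rw [show (-2/3 : ℝ) = -(2/3) by norm_num, Real.exp_neg]
    have hinv : (exp (2/3:ℝ))⁻¹ * exp (2/3:ℝ) = 1 := inv_mul_cancel₀ hp.ne'
    nlinarith [mul_nonneg (inv_nonneg.mpr hp.le) (by linarith : (0:ℝ) ≤ exp (2/3:ℝ) - 5/3), hinv]
  have htpos : (0:ℝ) ≤ ∑' j : ℕ, t ^ (j + D) / (j + D)! :=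
    tsum_nonneg fun j => by positivity
  have hfin : ∑' j : ℕ, t ^ (j + 2 * D) / (j + 2 * D)! ≤ (2/3) * exp t := by
    calc ∑' j : ℕ, t ^ (j + 2 * D) / (j + 2 * D)!
        ≤ exp (-2/3) * ∑' j : ℕ, t ^ (j + D) / (j + D)! := htail2
      _ ≤ (2/3) * exp t := by
          apply mul_le_mul hexp23 htailD htpos (by norm_num)
  linarith [hsplit]


lemma term_lower {a : ℝ} (ha : 1 ≤ a) {n : ℕ} (han : a ≤ n) {t : ℝ} (htn : (n:ℝ) + 2 ≤ t)
    {m : ℕ} (hm : m < 2 * ⌈t⌉₊) :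
    (1/4 : ℝ) ^ n * (t ^ m / m !) ≤
      t ^ (a * ⌈(m:ℝ) / a⌉₊) / Gamma (a * ⌈(m:ℝ) / a⌉₊ + 1) := by
  have ha0 : (0:ℝ) < a := by linarith
  have hn1 : (1:ℝ) ≤ (n:ℝ) := le_trans ha han
  have ht0 : (0:ℝ) < t := by linarith
  set k := ⌈(m:ℝ) / a⌉₊ with hk
  have h1 : (m:ℝ) ≤ a * k := by
    have h := Nat.le_ceil ((m:ℝ)/a)
    rw [div_le_iff₀ ha0] at h
    linarith [h]
  have h2 : a * k < (m:ℝ) + a := by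
    have hc := Nat.ceil_lt_add_one (by positivity : (0:ℝ) ≤ (m:ℝ)/a)
    have h := mul_lt_mul_of_pos_left hc ha0
    have he : a * ((m:ℝ)/a + 1) = (m:ℝ) + a := by field_simp
    rw [he] at h
    exact h
  set δ := a * k - (m:ℝ) with hδ
  have hδ0 : 0 ≤ δ := by simp only [hδ]; linarith
  have hδn : δ ≤ (n:ℝ) := by simp only [hδ]; linarith
  have hG : Gamma (a * k + 1) ≤ (m ! : ℝ) * ((m:ℝ) + 1 + δ) ^ δ := by
    have hg := gamma_add_le (x := (m:ℝ)+1) (by linarith [Nat.cast_nonneg (α := ℝ) m]) n δ hδ0 hδn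
    have harg1 : (m:ℝ) + 1 + δ = a * k + 1 := by simp only [hδ]; ring
    rw [show ((m:ℝ) + 1 + δ) = (m:ℝ) + 1 + δ from rfl] at hg
    -- hg : Gamma ((m+1) + δ) ≤ Gamma (m+1) * ((m+1) + δ)^δ
    have harg2 : (m:ℝ) + 1 + δ = ((m:ℝ) + 1) + δ := by ring
    rw [Real.Gamma_nat_eq_factorial] at hg
    calc Gamma (a * k + 1) = Gamma ((m:ℝ) + 1 + δ) := by rw [harg1]
      _ ≤ (m ! : ℝ) * ((m:ℝ) + 1 + δ) ^ δ := by
          have : ((m:ℝ) + 1) + δ = (m:ℝ) + 1 + δ := by ring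
          simpa [this] using hg
  have hGpos : 0 < Gamma (a * k + 1) := by
    apply Gamma_pos_of_pos
    have : (0:ℝ) ≤ a * k := by positivity
    linarith
  have hbpos : (0:ℝ) < (m:ℝ) + 1 + δ := by
    have : (0:ℝ) ≤ (m:ℝ) := Nat.cast_nonneg m
    linarith
  have hbase : (m:ℝ) + 1 + δ ≤ 4 * t := by
    have hceil : (⌈t⌉₊ : ℝ) < t + 1 := Nat.ceil_lt_add_one ht0.le
    have hm' : (m:ℝ) + 1 ≤ 2 * (⌈t⌉₊ : ℝ) := by
      have : m + 1 ≤ 2 * ⌈t⌉₊ := hm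
      exact_mod_cast this
    linarith
  have hnum : t ^ (a * k) = t ^ m * t ^ δ := by
    rw [← Real.rpow_natCast t m, ← Real.rpow_add ht0]
    congr 1
    simp only [hδ]; ring
  have hmain : (t ^ m / m !) * (t / ((m:ℝ) + 1 + δ)) ^ δ ≤
      t ^ (a * k) / Gamma (a * k + 1) := by
    calc (t ^ m / m !) * (t / ((m:ℝ) + 1 + δ)) ^ δ
        = t ^ (a * k) / ((m ! : ℝ) * ((m:ℝ) + 1 + δ) ^ δ) := by
          rw [hnum, Real.div_rpow ht0.le hbpos.le, _root_.div_mul_div_comm]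
      _ ≤ t ^ (a * k) / Gamma (a * k + 1) := by
          gcongr
  refine le_trans ?_ hmain
  have hq : (1/4 : ℝ) ≤ t / ((m:ℝ) + 1 + δ) := by
    rw [le_div_iff₀ hbpos]
    linarith
  have hr1 : ((1:ℝ)/4) ^ (δ : ℝ) ≤ (t / ((m:ℝ) + 1 + δ)) ^ δ :=
    Real.rpow_le_rpow (by norm_num) hq hδ0
  have hr2 : ((1:ℝ)/4) ^ ((n:ℕ) : ℝ) ≤ ((1:ℝ)/4) ^ (δ : ℝ) :=
    Real.rpow_le_rpow_of_exponent_ge (by norm_num) (by norm_num) hδn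
  have hr3 : ((1:ℝ)/4) ^ ((n:ℕ) : ℝ) = ((1:ℝ)/4) ^ n := Real.rpow_natCast _ n
  have hfin : ((1:ℝ)/4) ^ n ≤ (t / ((m:ℝ) + 1 + δ)) ^ δ := by
    rw [← hr3]
    exact hr2.trans hr1
  calc (1/4 : ℝ) ^ n * (t ^ m / m !) = (t ^ m / m !) * ((1:ℝ)/4) ^ n := by ring
    _ ≤ (t ^ m / m !) * (t / ((m:ℝ) + 1 + δ)) ^ δ := by
        gcongr


lemma ceil_mem_Icc {a : ℝ} (ha : 1 ≤ a) {n : ℕ} (han : a ≤ n) (m : ℕ) :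
    m ∈ Finset.Icc (⌊a * (⌈(m:ℝ)/a⌉₊ : ℕ)⌋₊ - n) ⌊a * (⌈(m:ℝ)/a⌉₊ : ℕ)⌋₊ := by
  have ha0 : (0:ℝ) < a := by linarith
  set b := ⌈(m:ℝ)/a⌉₊ with hb
  have h1 : (m:ℝ) ≤ a * b := by
    have h := Nat.le_ceil ((m:ℝ)/a)
    rw [div_le_iff₀ ha0] at h
    linarith [h]
  have h2 : a * b < (m:ℝ) + a := by
    have hc := Nat.ceil_lt_add_one (by positivity : (0:ℝ) ≤ (m:ℝ)/a)
    have h := mul_lt_mul_of_pos_left hc ha0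
    have he : a * ((m:ℝ)/a + 1) = (m:ℝ) + a := by field_simp
    rw [he] at h
    exact h
  have hab0 : (0:ℝ) ≤ a * b := by positivity
  have hup : m ≤ ⌊a * (b:ℝ)⌋₊ := Nat.le_floor h1
  have hlow : ⌊a * (b:ℝ)⌋₊ < m + n := by
    have hfl : (⌊a * (b:ℝ)⌋₊ : ℝ) ≤ a * b := Nat.floor_le hab0
    have : (⌊a * (b:ℝ)⌋₊ : ℝ) < ((m + n : ℕ) : ℝ) := by
      push_cast
      linarith
    exact_mod_cast this
  rw [Finset.mem_Icc]
  omega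

lemma lower_large {a : ℝ} (ha : 1 ≤ a) {n : ℕ} (han : a ≤ n) {t : ℝ}
    (htn : (n:ℝ) + 2 ≤ t) :
    (1/3 : ℝ) * (1/4) ^ n / ((n:ℝ) + 1) * exp t ≤
      ∑' j : ℕ, t ^ (a * j) / Gamma (a * j + 1) := by
  classical
  have hn1 : (1:ℝ) ≤ (n:ℝ) := le_trans ha han
  have ht2 : 2 ≤ t := by linarith
  have ht0 : (0:ℝ) < t := by linarith
  set M := 2 * ⌈t⌉₊ with hM
  set u : ℕ → ℝ := fun j => t ^ (a * j) / Gamma (a * j + 1) with hu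
  set e : ℕ → ℕ := fun m => ⌈(m:ℝ)/a⌉₊ with he
  have hS : (1/3 : ℝ) * exp t ≤ ∑ m ∈ Finset.range M, t ^ m / m ! := tail_lower ht2
  have hsum1 : (1/4 : ℝ) ^ n * ∑ m ∈ Finset.range M, t ^ m / m ! ≤
      ∑ m ∈ Finset.range M, u (e m) := by
    rw [Finset.mul_sum]
    refine Finset.sum_le_sum fun m hm => ?_
    exact term_lower ha han htn (Finset.mem_range.mp hm)
  have hcomp := Finset.sum_comp u e (s := Finset.range M)
  have hucard : ∀ b ∈ (Finset.range M).image e,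
      ({m ∈ Finset.range M | e m = b} : Finset ℕ).card • u b ≤ ((n:ℝ) + 1) * u b := by
    intro b _
    have hsub : ({m ∈ Finset.range M | e m = b} : Finset ℕ) ⊆
        Finset.Icc (⌊a * (b:ℝ)⌋₊ - n) ⌊a * (b:ℝ)⌋₊ := by
      intro m hm
      rw [Finset.mem_filter] at hm
      obtain ⟨_, hEq⟩ := hm
      have := ceil_mem_Icc ha han m
      rw [show (⌈(m:ℝ)/a⌉₊ : ℕ) = e m from rfl, hEq] at this
      exact this
    have hcard : ({m ∈ Finset.range M | e m = b} : Finset ℕ).card ≤ n + 1 := by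
      refine le_trans (Finset.card_le_card hsub) ?_
      rw [Nat.card_Icc]
      omega
    have hub : 0 ≤ u b := u_nonneg ha ht0.le b
    rw [nsmul_eq_mul]
    have : (({m ∈ Finset.range M | e m = b} : Finset ℕ).card : ℝ) ≤ (n:ℝ) + 1 := by
      exact_mod_cast hcard
    exact mul_le_mul_of_nonneg_right this hub |>.trans_eq rfl
  have hsum2 : ∑ m ∈ Finset.range M, u (e m) ≤ ((n:ℝ) + 1) * ∑' j, u j := by
    rw [hcomp]
    calc ∑ b ∈ (Finset.range M).image e, ({m ∈ Finset.range M | e m = b} : Finset ℕ).card • u b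
        ≤ ∑ b ∈ (Finset.range M).image e, ((n:ℝ) + 1) * u b := Finset.sum_le_sum hucard
      _ = ((n:ℝ) + 1) * ∑ b ∈ (Finset.range M).image e, u b := by rw [Finset.mul_sum]
      _ ≤ ((n:ℝ) + 1) * ∑' j, u j := by
          have hle := Summable.sum_le_tsum ((Finset.range M).image e)
            (fun j _ => u_nonneg ha ht0.le j) (summable_u ha ht0.le)
          have hpos : (0:ℝ) ≤ (n:ℝ) + 1 := by linarith
          exact mul_le_mul_of_nonneg_left hle hpos
  have hfinal : (1/4 : ℝ) ^ n * ((1/3) * exp t) ≤ ((n:ℝ) + 1) * ∑' j, u j := by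
    calc (1/4 : ℝ) ^ n * ((1/3) * exp t) ≤ (1/4 : ℝ) ^ n * ∑ m ∈ Finset.range M, t ^ m / m ! := by
          have h4 : (0:ℝ) ≤ (1/4:ℝ) ^ n := by positivity
          exact mul_le_mul_of_nonneg_left hS h4
      _ ≤ ∑ m ∈ Finset.range M, u (e m) := hsum1
      _ ≤ ((n:ℝ) + 1) * ∑' j, u j := hsum2
  have hnpos : (0:ℝ) < (n:ℝ) + 1 := by linarith
  rw [div_mul_eq_mul_div, div_le_iff₀ hnpos]
  calc (1/3 : ℝ) * (1/4) ^ n * exp t = (1/4 : ℝ) ^ n * ((1/3) * exp t) := by ring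
    _ ≤ ((n:ℝ) + 1) * ∑' j, u j := hfinal
    _ = (∑' j, u j) * ((n:ℝ) + 1) := by ring


lemma key {a : ℝ} (ha : 1 ≤ a) :
    ∃ c C : ℝ, 0 < c ∧ 0 < C ∧ ∀ t : ℝ, 0 ≤ t →
      c * Real.exp t ≤ mittagLeffler a (t ^ a) ∧ mittagLeffler a (t ^ a) ≤ C * Real.exp t := by
  set n := ⌈a⌉₊ with hn
  have han : a ≤ n := Nat.le_ceil a
  have hn1 : (1:ℝ) ≤ (n:ℝ) := le_trans ha han
  have hml : ∀ t : ℝ, 0 ≤ t →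
      mittagLeffler a (t ^ a) = ∑' k : ℕ, t ^ (a * k) / Gamma (a * k + 1) := by
    intro t ht
    unfold mittagLeffler
    exact tsum_congr fun k => by rw [ml_eq_aux ht]
  refine ⟨min (exp (-((n:ℝ)+2))) ((1/3) * (1/4)^n / ((n:ℝ)+1)), 4, ?_, by norm_num, ?_⟩
  · apply lt_min (exp_pos _)
    have : (0:ℝ) < (n:ℝ) + 1 := by linarith
    positivity
  intro t ht
  rw [hml t ht]
  constructor
  · rcases le_or_gt t ((n:ℝ)+2) with hsmall | hlarge
    · have h1 : (1:ℝ) ≤ ∑' k : ℕ, t ^ (a * k) / Gamma (a * k + 1) := by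
        have h := Summable.le_tsum (summable_u ha ht) 0 (fun j _ => u_nonneg ha ht j)
        have hu0 : t ^ (a * ((0:ℕ):ℝ)) / Gamma (a * ((0:ℕ):ℝ) + 1) = 1 := by
          norm_num [Real.rpow_zero, Real.Gamma_one]
        rw [hu0] at h
        exact h
      calc min (exp (-((n:ℝ)+2))) ((1/3) * (1/4)^n / ((n:ℝ)+1)) * exp t
          ≤ exp (-((n:ℝ)+2)) * exp ((n:ℝ)+2) :=
            mul_le_mul (min_le_left _ _) (exp_le_exp.mpr hsmall) (exp_pos t).le (exp_pos _).le
        _ = 1 := by rw [← Real.exp_add, neg_add_cancel, Real.exp_zero]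
        _ ≤ _ := h1
    · calc min (exp (-((n:ℝ)+2))) ((1/3) * (1/4)^n / ((n:ℝ)+1)) * exp t
          ≤ (1/3) * (1/4)^n / ((n:ℝ)+1) * exp t :=
            mul_le_mul_of_nonneg_right (min_le_right _ _) (exp_pos t).le
        _ ≤ _ := lower_large ha han hlarge.le
  · calc (∑' k : ℕ, t ^ (a * k) / Gamma (a * k + 1)) ≤ 4 * exp t := upper ha ht
      _ = 4 * exp t := rfl

end MLaux

/-- The Mittag-Leffler function `ℰ_{2/s}(α^{2/s} x²)` is comparable to the
stretched exponential `exp(α x^s)`. -/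
theorem mittagLeffler_comparable_exp
    (s α : ℝ) (hs : 0 < s ∧ s ≤ 2) (hα : 0 < α) :
    ∃ c C : ℝ, 0 < c ∧ 0 < C ∧
      ∀ x : ℝ, 0 ≤ x →
        c * Real.exp (α * x ^ s) ≤ mittagLeffler (2 / s) (α ^ (2 / s) * x ^ 2) ∧
        mittagLeffler (2 / s) (α ^ (2 / s) * x ^ 2) ≤ C * Real.exp (α * x ^ s) := by
  obtain ⟨hs0, hs2⟩ := hs
  have ha : 1 ≤ 2/s := by rw [le_div_iff₀ hs0]; linarith
  obtain ⟨c, C, hc, hC, h⟩ := MLaux.key ha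
  refine ⟨c, C, hc, hC, fun x hx => ?_⟩
  have ht : 0 ≤ α * x ^ s := mul_nonneg hα.le (Real.rpow_nonneg hx s)
  have hx2 : (x ^ s) ^ (2/s) = x ^ (2:ℕ) := by
    rw [← Real.rpow_natCast x 2, ← Real.rpow_mul hx]
    congr 1
    field_simp
    norm_num
  have harg : (α * x ^ s) ^ (2/s) = α ^ (2/s) * x ^ 2 := by
    rw [Real.mul_rpow hα.le (Real.rpow_nonneg hx s), hx2]
  have hres := h (α * x ^ s) ht
  rw [harg] at hres
  exact hres
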